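/- There exist a nonzero complex number s₀ and an invertible 4×4 complex matrix Z such that Z⁻¹𝒞Z = 𝒥(s₀), where 𝒥(s₀) is the block matrix with rows [s₀,1,0,0], [0,s₀,0,0], [0,0,−s₀,1], [0,0,0,−s₀], if and only if Δ_h = 0; moreover, in that case s₀² = −(ξ₁ + ξ₂ + g/(L₁L₂))/2. -/

import Mathlib

open Matrix

/-- The Jordan form consisting of two 2×2 Jordan blocks with eigenvalues `s₀` and `-s₀`. -/
def jordanTwoBlocks (s₀ : ℂ) : Matrix (Fin 4) (Fin 4) ℂ :=
  !![s₀, 1, 0, 0;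
     0, s₀, 0, 0;
     0, 0, -s₀, 1;
     0, 0, 0, -s₀]


lemma myConjMul (Z M N : Matrix (Fin 4) (Fin 4) ℂ) (h : IsUnit Z.det) :
    (Z⁻¹ * M * Z) * (Z⁻¹ * N * Z) = Z⁻¹ * (M * N) * Z := by
  have h1 : Z * Z⁻¹ = 1 := Matrix.mul_nonsing_inv Z h
  calc (Z⁻¹ * M * Z) * (Z⁻¹ * N * Z) = Z⁻¹ * M * (Z * Z⁻¹) * N * Z := by
        simp only [Matrix.mul_assoc]
      _ = Z⁻¹ * (M * N) * Z := by rw [h1]; simp only [Matrix.mul_assoc, Matrix.mul_one]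

lemma myConjTrace (Z M : Matrix (Fin 4) (Fin 4) ℂ) (h : IsUnit Z.det) :
    (Z⁻¹ * M * Z).trace = M.trace := by
  have h1 : Z * Z⁻¹ = 1 := Matrix.mul_nonsing_inv Z h
  rw [Matrix.mul_assoc, Matrix.trace_mul_comm, Matrix.mul_assoc, h1, Matrix.mul_one]

/-- Key: existence of the Jordan similarity forces the two trace equations. -/
lemma key_traces (x1 x2 A B : ℂ) (C : Matrix (Fin 4) (Fin 4) ℂ)
    (hC : C = !![0, 0, 1, 0; 0, 0, 0, 1; -x1, 0, 0, A; 0, -x2, -B, 0])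
    (s : ℂ) (Z : Matrix (Fin 4) (Fin 4) ℂ) (hd : IsUnit Z.det)
    (hZ : Z⁻¹ * C * Z = jordanTwoBlocks s) :
    4 * s ^ 2 = -2 * (x1 + x2 + A * B) ∧
    4 * s ^ 4 = 2 * (x1 + x2 + A * B) ^ 2 - 4 * (x1 * x2) := by
  have hJ2 : jordanTwoBlocks s * jordanTwoBlocks s = Z⁻¹ * (C * C) * Z := by
    rw [← hZ, myConjMul _ _ _ hd]
  have e2 : (jordanTwoBlocks s * jordanTwoBlocks s).trace = (C * C).trace := by
    rw [hJ2, myConjTrace _ _ hd]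
  have e4 : ((jordanTwoBlocks s * jordanTwoBlocks s) *
      (jordanTwoBlocks s * jordanTwoBlocks s)).trace = ((C * C) * (C * C)).trace := by
    rw [hJ2, myConjMul _ _ _ hd, myConjTrace _ _ hd]
  constructor
  · rw [hC] at e2
    simp [jordanTwoBlocks, Matrix.trace, Matrix.mul_apply, Fin.sum_univ_four] at e2
    linear_combination e2
  · rw [hC] at e4
    simp [jordanTwoBlocks, Matrix.trace, Matrix.mul_apply, Fin.sum_univ_four] at e4
    linear_combination e4

/-- Key: construction of the similarity when the degeneracy equations hold. -/
lemma key_construct (x1 x2 A B : ℂ) (hx1 : x1 ≠ 0) (hA : A ≠ 0)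
    (s : ℂ) (hs : s ≠ 0)
    (hs2 : s ^ 2 = -((x1 + x2 + A * B) / 2)) (hs4 : s ^ 4 = x1 * x2)
    (C : Matrix (Fin 4) (Fin 4) ℂ)
    (hC : C = !![0, 0, 1, 0; 0, 0, 0, 1; -x1, 0, 0, A; 0, -x2, -B, 0]) :
    ∃ Z : Matrix (Fin 4) (Fin 4) ℂ, IsUnit Z.det ∧ Z⁻¹ * C * Z = jordanTwoBlocks s := by
  set Z : Matrix (Fin 4) (Fin 4) ℂ :=
    !![A * s ^ 2, 0, -(A * s ^ 2), 0;
       s * (x1 + s ^ 2), s ^ 2 - x1, s * (x1 + s ^ 2), x1 - s ^ 2;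
       A * s ^ 3, A * s ^ 2, A * s ^ 3, -(A * s ^ 2);
       s ^ 2 * (x1 + s ^ 2), 2 * s ^ 3, -(s ^ 2 * (x1 + s ^ 2)), 2 * s ^ 3] with hZdef
  have hdet : Z.det = -16 * A ^ 2 * s ^ 8 * x1 := by
    rw [hZdef]
    simp [Matrix.det_succ_row_zero, Fin.sum_univ_succ, Matrix.vecHead, Matrix.vecTail,
      Fin.succAbove]
    ring
  have hdu : IsUnit Z.det := by
    rw [hdet, isUnit_iff_ne_zero]
    intro h
    rcases mul_eq_zero.1 h with h | h
    · rcases mul_eq_zero.1 h with h | h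
      · rcases mul_eq_zero.1 h with h | h
        · norm_num at h
        · exact hA (pow_eq_zero_iff (by norm_num) |>.1 h)
      · exact hs (pow_eq_zero_iff (by norm_num) |>.1 h)
    · exact hx1 h
  refine ⟨Z, hdu, ?_⟩
  have hCZ : C * Z = Z * jordanTwoBlocks s := by
    rw [hC, hZdef]
    ext i j
    fin_cases i <;> fin_cases j <;>
      simp [jordanTwoBlocks, Matrix.mul_apply, Fin.sum_univ_four, Matrix.vecHead, Matrix.vecTail]
    all_goals
      first
      | ring1
      | linear_combination (-2 * s ^ 3) * hs2 + s * hs4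
      | linear_combination (-2 * s ^ 2) * hs2 - hs4
      | linear_combination (2 * s ^ 2) * hs2 + hs4
  rw [Matrix.mul_assoc, hCZ, ← Matrix.mul_assoc, Matrix.nonsing_inv_mul Z hdu, Matrix.one_mul]

/-- There exist a nonzero `s₀ : ℂ` and an invertible `Z` with
`Z⁻¹ 𝒞 Z = 𝒥(s₀)` iff `Δ_h = 0`; moreover in that case
`s₀² = −(ξ₁ + ξ₂ + g/(L₁L₂))/2`. -/
theorem jordan_form_iff_degeneracy (L₁ C₁ L₂ C₂ G₁ : ℝ)
    (hL₁ : L₁ ≠ 0) (hC₁ : C₁ ≠ 0) (hL₂ : L₂ ≠ 0) (hC₂ : C₂ ≠ 0) (hG₁ : G₁ ≠ 0)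
    (ξ₁ ξ₂ g : ℝ)
    (hξ₁ : ξ₁ = 1 / (L₁ * C₁)) (hξ₂ : ξ₂ = 1 / (L₂ * C₂)) (hg : g = G₁ ^ 2)
    (𝒞 : Matrix (Fin 4) (Fin 4) ℂ)
    (h𝒞 : 𝒞 = !![0, 0, 1, 0;
                 0, 0, 0, 1;
                 -(ξ₁ : ℂ), 0, 0, (G₁ : ℂ) / (L₁ : ℂ);
                 0, -(ξ₂ : ℂ), -((G₁ : ℂ) / (L₂ : ℂ)), 0])
    (Δh : ℝ)
    (hΔ : Δh = g ^ 2 / (L₁ ^ 2 * L₂ ^ 2) + 2 * (ξ₁ + ξ₂) * g / (L₁ * L₂) + (ξ₁ - ξ₂) ^ 2) :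
    ((∃ s₀ : ℂ, s₀ ≠ 0 ∧ ∃ Z : Matrix (Fin 4) (Fin 4) ℂ, IsUnit Z.det ∧
        Z⁻¹ * 𝒞 * Z = jordanTwoBlocks s₀) ↔ Δh = 0) ∧
    (∀ s₀ : ℂ, s₀ ≠ 0 →
      (∃ Z : Matrix (Fin 4) (Fin 4) ℂ, IsUnit Z.det ∧ Z⁻¹ * 𝒞 * Z = jordanTwoBlocks s₀) →
      s₀ ^ 2 = -(((ξ₁ : ℂ) + (ξ₂ : ℂ) + (g : ℂ) / ((L₁ : ℂ) * (L₂ : ℂ))) / 2)) := by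
  have hL₁' : (L₁ : ℂ) ≠ 0 := Complex.ofReal_ne_zero.2 hL₁
  have hL₂' : (L₂ : ℂ) ≠ 0 := Complex.ofReal_ne_zero.2 hL₂
  have hG' : (G₁ : ℂ) ≠ 0 := Complex.ofReal_ne_zero.2 hG₁
  have hx1R : ξ₁ ≠ 0 := by rw [hξ₁]; exact one_div_ne_zero (mul_ne_zero hL₁ hC₁)
  have hx2R : ξ₂ ≠ 0 := by rw [hξ₂]; exact one_div_ne_zero (mul_ne_zero hL₂ hC₂)
  have hx1 : (ξ₁ : ℂ) ≠ 0 := Complex.ofReal_ne_zero.2 hx1R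
  have hx2 : (ξ₂ : ℂ) ≠ 0 := Complex.ofReal_ne_zero.2 hx2R
  have hA : (G₁ : ℂ) / (L₁ : ℂ) ≠ 0 := div_ne_zero hG' hL₁'
  have hAB : (G₁ : ℂ) / (L₁ : ℂ) * ((G₁ : ℂ) / (L₂ : ℂ)) = (g : ℂ) / ((L₁ : ℂ) * (L₂ : ℂ)) := by
    rw [hg]; push_cast; field_simp
  have hΔC : (Δh : ℂ) =
      ((ξ₁ : ℂ) + (ξ₂ : ℂ) + (G₁ : ℂ) / (L₁ : ℂ) * ((G₁ : ℂ) / (L₂ : ℂ))) ^ 2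
        - 4 * ((ξ₁ : ℂ) * (ξ₂ : ℂ)) := by
    rw [hΔ, hg]; push_cast; field_simp; ring
  refine ⟨⟨?_, ?_⟩, ?_⟩
  · rintro ⟨s₀, hs₀, Z, hd, hZ⟩
    obtain ⟨e2, e4⟩ := key_traces (ξ₁ : ℂ) (ξ₂ : ℂ) ((G₁ : ℂ) / (L₁ : ℂ)) ((G₁ : ℂ) / (L₂ : ℂ))
      𝒞 h𝒞 s₀ Z hd hZ
    have h0 : (Δh : ℂ) = 0 := by
      rw [hΔC]
      linear_combination ((2 * s₀ ^ 2 - ((ξ₁ : ℂ) + (ξ₂ : ℂ)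
        + (G₁ : ℂ) / (L₁ : ℂ) * ((G₁ : ℂ) / (L₂ : ℂ)))) / 2) * e2 - e4
    exact_mod_cast h0
  · intro hΔ0
    have h0 : (0 : ℂ) =
        ((ξ₁ : ℂ) + (ξ₂ : ℂ) + (G₁ : ℂ) / (L₁ : ℂ) * ((G₁ : ℂ) / (L₂ : ℂ))) ^ 2
          - 4 * ((ξ₁ : ℂ) * (ξ₂ : ℂ)) := by
      rw [← hΔC, hΔ0]; simp
    have hbne : ((ξ₁ : ℂ) + (ξ₂ : ℂ) + (G₁ : ℂ) / (L₁ : ℂ) * ((G₁ : ℂ) / (L₂ : ℂ))) ≠ 0 := by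
      intro h
      apply mul_ne_zero hx1 hx2
      rw [h] at h0
      linear_combination h0 / 4
    obtain ⟨s, hs2⟩ := IsAlgClosed.exists_pow_nat_eq
      (-(((ξ₁ : ℂ) + (ξ₂ : ℂ) + (G₁ : ℂ) / (L₁ : ℂ) * ((G₁ : ℂ) / (L₂ : ℂ))) / 2)) two_pos
    have hs0 : s ≠ 0 := by
      intro h
      apply hbne
      rw [h] at hs2
      linear_combination (2 : ℂ) * hs2
    have hs4 : s ^ 4 = (ξ₁ : ℂ) * (ξ₂ : ℂ) := by
      have h44 : s ^ 4 = (s ^ 2) ^ 2 := by ring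
      rw [h44, hs2]
      linear_combination -h0 / 4
    obtain ⟨Z, hdu, hZ⟩ := key_construct (ξ₁ : ℂ) (ξ₂ : ℂ) ((G₁ : ℂ) / (L₁ : ℂ))
      ((G₁ : ℂ) / (L₂ : ℂ)) hx1 hA s hs0 hs2 hs4 𝒞 h𝒞
    exact ⟨s, hs0, Z, hdu, hZ⟩
  · rintro s₀ hs₀ ⟨Z, hd, hZ⟩
    obtain ⟨e2, _⟩ := key_traces (ξ₁ : ℂ) (ξ₂ : ℂ) ((G₁ : ℂ) / (L₁ : ℂ)) ((G₁ : ℂ) / (L₂ : ℂ))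
      𝒞 h𝒞 s₀ Z hd hZ
    rw [← hAB]
    linear_combination e2 / 4
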